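/- Fix γ ∈ (0,1), σ^2 > 0, P_t ∈ [0,1), and a constant C ∈ ℝ, and let G(x) = (1 − P_t) log₂((x + σ^2)/(γ x + σ^2)) − (1/2) log₂(1 + x/σ^2) + C. Suppose x* := σ^2 (1 − 2γ − 2P_t + 2γ P_t)/γ > 0. Then G is strictly increasing on [0, x*] and strictly decreasing on [x*, ∞); in particular x* is the unique global maximizer of G on [0, ∞). -/

import Mathlib

/-- For `G(x) = (1 − P_t) log₂((x + σ2)/(γx + σ2)) − (1/2) log₂(1 + x/σ2) + C`, if
`x* = σ2(1 − 2γ − 2P_t + 2γP_t)/γ > 0`, then `G` is strictly increasing on `[0, x*]`,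
strictly decreasing on `[x*, ∞)`, and `x*` is the unique global maximizer of `G` on
`[0, ∞)`. -/
theorem noma_nonsic_user_gain_unique_max (γ σ2 Pt C : ℝ) (hγ0 : 0 < γ) (hγ1 : γ < 1)
    (hσ : 0 < σ2) (hPt0 : 0 ≤ Pt) (hPt1 : Pt < 1)
    (hxstar : 0 < σ2 * (1 - 2 * γ - 2 * Pt + 2 * γ * Pt) / γ) :
    StrictMonoOn
      (fun x : ℝ =>
        (1 - Pt) * Real.logb 2 ((x + σ2) / (γ * x + σ2)) -
          (1 / 2) * Real.logb 2 (1 + x / σ2) + C)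
      (Set.Icc 0 (σ2 * (1 - 2 * γ - 2 * Pt + 2 * γ * Pt) / γ)) ∧
    StrictAntiOn
      (fun x : ℝ =>
        (1 - Pt) * Real.logb 2 ((x + σ2) / (γ * x + σ2)) -
          (1 / 2) * Real.logb 2 (1 + x / σ2) + C)
      (Set.Ici (σ2 * (1 - 2 * γ - 2 * Pt + 2 * γ * Pt) / γ)) ∧
    ∀ x ∈ Set.Ici (0 : ℝ), x ≠ σ2 * (1 - 2 * γ - 2 * Pt + 2 * γ * Pt) / γ →
      ((1 - Pt) * Real.logb 2 ((x + σ2) / (γ * x + σ2)) -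
          (1 / 2) * Real.logb 2 (1 + x / σ2) + C) <
        ((1 - Pt) * Real.logb 2
              ((σ2 * (1 - 2 * γ - 2 * Pt + 2 * γ * Pt) / γ + σ2) /
                (γ * (σ2 * (1 - 2 * γ - 2 * Pt + 2 * γ * Pt) / γ) + σ2)) -
            (1 / 2) * Real.logb 2 (1 + σ2 * (1 - 2 * γ - 2 * Pt + 2 * γ * Pt) / γ / σ2) + C) := by
  set s : ℝ := σ2 * (1 - 2 * γ - 2 * Pt + 2 * γ * Pt) with hs_def
  set xs : ℝ := s / γ with hxs_def
  have hs : 0 < s := by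
    by_contra h
    push_neg at h
    have : s / γ ≤ 0 := div_nonpos_of_nonpos_of_nonneg h hγ0.le
    linarith [hxstar]
  have hxs : 0 < xs := hxstar
  set H : ℝ → ℝ := fun x =>
    (1 - Pt) * (Real.log (x + σ2) - Real.log (γ * x + σ2)) -
      (1 / 2) * (Real.log (x + σ2) - Real.log σ2) with hH_def
  -- derivative of H
  have hHderiv : ∀ x : ℝ, 0 < x + σ2 → 0 < γ * x + σ2 →
      HasDerivAt H ((1 - Pt) * (1 / (x + σ2) - γ / (γ * x + σ2)) -
        (1 / 2) * (1 / (x + σ2))) x := by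
    intro x hx1 hx2
    have h1 : HasDerivAt (fun x : ℝ => Real.log (x + σ2)) (1 / (x + σ2)) x := by
      have := ((hasDerivAt_id x).add_const σ2).log hx1.ne'
      simpa using this
    have h2 : HasDerivAt (fun x : ℝ => Real.log (γ * x + σ2)) (γ / (γ * x + σ2)) x := by
      have := (((hasDerivAt_id x).const_mul γ).add_const σ2).log hx2.ne'
      simpa using this
    have h3 : HasDerivAt (fun x : ℝ => Real.log (x + σ2) - Real.log σ2)
        (1 / (x + σ2)) x := by
      simpa using h1.sub_const (Real.log σ2)
    exact ((h1.sub h2).const_mul (1 - Pt)).sub (h3.const_mul (1 / 2))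
  -- derivative formula as a quotient
  have hderiv_eq : ∀ x : ℝ, 0 < x + σ2 → 0 < γ * x + σ2 →
      (1 - Pt) * (1 / (x + σ2) - γ / (γ * x + σ2)) - (1 / 2) * (1 / (x + σ2)) =
        (s - γ * x) / (2 * (x + σ2) * (γ * x + σ2)) := by
    intro x hx1 hx2
    rw [hs_def]
    rw [eq_div_iff (by positivity)]
    linear_combination (2 * (1 - Pt) - 1) * (γ * x + σ2) * inv_mul_cancel₀ hx1.ne' -
      2 * (1 - Pt) * γ * (x + σ2) * inv_mul_cancel₀ hx2.ne'
  have hcont : ∀ x : ℝ, 0 < x + σ2 → 0 < γ * x + σ2 → ContinuousAt H x := by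
    intro x hx1 hx2
    exact (hHderiv x hx1 hx2).continuousAt
  have hpos_aux : ∀ x : ℝ, 0 ≤ x → 0 < x + σ2 ∧ 0 < γ * x + σ2 := by
    intro x hx
    constructor <;> nlinarith
  -- strict monotonicity of H on [0, xs]
  have hmonoH : StrictMonoOn H (Set.Icc 0 xs) := by
    apply strictMonoOn_of_deriv_pos (convex_Icc 0 xs)
    · intro x hx
      obtain ⟨hx1, hx2⟩ := hpos_aux x hx.1
      exact (hcont x hx1 hx2).continuousWithinAt
    · intro x hx
      rw [interior_Icc] at hx
      obtain ⟨hx1, hx2⟩ := hpos_aux x hx.1.le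
      rw [(hHderiv x hx1 hx2).deriv, hderiv_eq x hx1 hx2]
      apply div_pos
      · have : γ * x < s := by
          have := hx.2
          rw [hxs_def, lt_div_iff₀ hγ0] at this
          linarith
        linarith
      · positivity
  -- strict antitonicity of H on [xs, ∞)
  have hantiH : StrictAntiOn H (Set.Ici xs) := by
    apply strictAntiOn_of_deriv_neg (convex_Ici xs)
    · intro x hx
      obtain ⟨hx1, hx2⟩ := hpos_aux x (hxs.le.trans hx)
      exact (hcont x hx1 hx2).continuousWithinAt
    · intro x hx
      rw [interior_Ici] at hx
      obtain ⟨hx1, hx2⟩ := hpos_aux x (hxs.le.trans hx.le)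
      rw [(hHderiv x hx1 hx2).deriv, hderiv_eq x hx1 hx2]
      apply div_neg_of_neg_of_pos
      · have hlt : s / γ < x := hx
        rw [div_lt_iff₀ hγ0] at hlt
        linarith
      · positivity
  -- G equals H / log 2 + C on [0, ∞)
  have hGH : ∀ x : ℝ, 0 ≤ x →
      (1 - Pt) * Real.logb 2 ((x + σ2) / (γ * x + σ2)) -
        (1 / 2) * Real.logb 2 (1 + x / σ2) + C = H x / Real.log 2 + C := by
    intro x hx
    obtain ⟨hx1, hx2⟩ := hpos_aux x hx
    have h1p : (1 : ℝ) + x / σ2 = (x + σ2) / σ2 := by field_simp; ring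
    rw [Real.logb, Real.logb, Real.log_div hx1.ne' hx2.ne', h1p,
      Real.log_div hx1.ne' hσ.ne', hH_def]
    ring
  have hlog2 : 0 < Real.log 2 := Real.log_pos one_lt_two
  refine ⟨?_, ?_, ?_⟩
  · intro a ha b hb hab
    simp only
    rw [hGH a ha.1, hGH b hb.1]
    have := hmonoH ha hb hab
    gcongr
  · intro a ha b hb hab
    simp only
    rw [hGH a (hxs.le.trans ha), hGH b (hxs.le.trans hb)]
    have := hantiH ha hb hab
    gcongr
  · intro x hx hne
    have hxsmem : xs ∈ Set.Icc (0 : ℝ) xs := ⟨hxs.le, le_refl _⟩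
    rw [hGH x hx, hGH xs hxs.le]
    rcases lt_or_gt_of_ne hne with h | h
    · have := hmonoH ⟨hx, h.le⟩ hxsmem h
      gcongr
    · have := hantiH (le_refl xs) h.le h
      gcongr
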